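/- Let n be a positive integer whose binary expansion is x 0 1^(b+1) 0^c (most significant bits first), where b, c ≥ 0 and x is a possibly empty binary word; that is, n = X·2^(b+c+2) + (2^(b+1)−1)·2^c where X is the integer with expansion x. Then the smallest integer m > n with the same binary digit sum as n is m = X·2^(b+c+2) + 2^(b+c+1) + (2^b − 1); i.e., m has binary expansion x 1 0^(c+1) 1^b. -/

import Mathlib

/-- binary digit sum -/
def s (n : ℕ) : ℕ := (Nat.digits 2 n).sum

lemma s_zero : s 0 = 0 := by simp [s]

lemma s_one : s 1 = 1 := by simp [s]

lemma s_split {q t : ℕ} (A : ℕ) (hq : q < 2 ^ t) : s (q + 2 ^ t * A) = s q + s A := by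
  rcases Nat.eq_zero_or_pos A with rfl | hA
  · simp [s]
  have hl : (Nat.digits 2 q).length ≤ t := by
    rcases Nat.eq_zero_or_pos q with rfl | hq0
    · simp
    · have := (Nat.log_lt_iff_lt_pow one_lt_two hq0.ne').mpr hq
      rw [Nat.digits_len 2 q one_lt_two hq0.ne']
      omega
  obtain ⟨k, hk⟩ := Nat.exists_eq_add_of_le hl
  unfold s
  rw [hk, ← Nat.digits_append_zeroes_append_digits one_lt_two hA]
  simp

lemma s_ones (k : ℕ) : s (2 ^ k - 1) = k := by
  induction k with
  | zero => simp [s]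
  | succ k ih =>
    have hb : 1 ≤ 2 ^ k := Nat.one_le_two_pow
    have h : 2 ^ (k + 1) - 1 = (2 ^ k - 1) + 2 ^ k * 1 := by
      have h2 : 2 ^ (k + 1) = 2 * 2 ^ k := by ring
      omega
    rw [h, s_split 1 (by omega), ih, s_one]

lemma s_pos {f : ℕ} (hf : 0 < f) : 0 < s f := by
  by_contra h
  push_neg at h
  simp only [s, Nat.le_zero] at h
  have hall : ∀ d ∈ Nat.digits 2 f, d = 0 := by
    intro d hd
    have := List.single_le_sum (l := Nat.digits 2 f) (fun x _ => Nat.zero_le x) d hd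
    omega
  have hne : Nat.digits 2 f ≠ [] := Nat.digits_ne_nil_iff_ne_zero.mpr hf.ne'
  exact Nat.getLast_digit_ne_zero 2 hf.ne' (hall _ (List.getLast_mem hne))

lemma s_lt_of {b : ℕ} : ∀ {e : ℕ}, e + 1 < 2 ^ b → s e < b := by
  induction b with
  | zero => intro e he; simp at he
  | succ b ih =>
    intro e he
    have hb : 1 ≤ 2 ^ b := Nat.one_le_two_pow
    have h2b : 2 ^ (b + 1) = 2 * 2 ^ b := by ring
    have h2 : e % 2 < 2 ^ 1 := by omega
    have hsplit : s e = s (e % 2) + s (e / 2) := by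
      conv_lhs => rw [show e = e % 2 + 2 ^ 1 * (e / 2) by omega]
      exact s_split _ h2
    have hm : s (e % 2) ≤ 1 := by
      rcases Nat.mod_two_eq_zero_or_one e with h | h <;> rw [h] <;>
        simp [s_zero, s_one]
    by_cases hc : e / 2 + 1 < 2 ^ b
    · have := ih hc
      omega
    · push_neg at hc
      have hq : e / 2 = 2 ^ b - 1 := by omega
      have hmod : e % 2 = 0 := by omega
      rw [hsplit, hmod, hq, s_ones, s_zero]
      omega

theorem stmt_17 (X b c n m : ℕ)
    (hn : n = X * 2 ^ (b + c + 2) + (2 ^ (b + 1) - 1) * 2 ^ c)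
    (hm : m = X * 2 ^ (b + c + 2) + 2 ^ (b + c + 1) + (2 ^ b - 1))
    (hpos : 0 < n) :
    s m = s n ∧ n < m ∧ ∀ p : ℕ, n < p → p < m → s p ≠ s n := by
  have f4 : 1 ≤ 2 ^ c := Nat.one_le_two_pow
  have f5 : 1 ≤ 2 ^ b := Nat.one_le_two_pow
  have f3 : (2 : ℕ) ^ (b + c + 1) * 2 = 2 ^ (b + c + 2) := by ring
  have f6 : (2 : ℕ) ^ b ≤ 2 ^ (b + c + 1) := Nat.pow_le_pow_right (by norm_num) (by omega)
  have f2 : (2 : ℕ) ^ c ≤ 2 ^ (b + c + 1) := Nat.pow_le_pow_right (by norm_num) (by omega)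
  have f1 : (2 ^ (b + 1) - 1) * 2 ^ c = 2 ^ (b + c + 1) - 2 ^ c := by
    have h : (2 : ℕ) ^ (b + 1) * 2 ^ c = 2 ^ (b + c + 1) := by ring
    rw [Nat.sub_mul, one_mul, h]
  have f1' : (2 : ℕ) ^ c * (2 ^ (b + 1) - 1) = (2 ^ (b + 1) - 1) * 2 ^ c := mul_comm _ _
  have f7 : (2 : ℕ) ^ b * 2 ^ (c + 1) = 2 ^ (b + c + 1) := by ring
  have hA' : X * 2 ^ (b + c + 2) = 2 ^ (b + c + 2) * X := mul_comm _ _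
  -- s n
  have hrlt : (2 ^ (b + 1) - 1 : ℕ) * 2 ^ c < 2 ^ (b + c + 2) := by omega
  have hsn : s n = b + 1 + s X := by
    rw [hn, show X * 2 ^ (b + c + 2) + (2 ^ (b + 1) - 1) * 2 ^ c
        = (2 ^ (b + 1) - 1) * 2 ^ c + 2 ^ (b + c + 2) * X by omega,
      s_split X hrlt,
      show (2 ^ (b + 1) - 1 : ℕ) * 2 ^ c = 0 + 2 ^ c * (2 ^ (b + 1) - 1) by omega,
      s_split _ (by omega : (0 : ℕ) < 2 ^ c), s_zero, s_ones]
    omega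
  -- s m
  have hlt2 : (2 : ℕ) ^ (b + c + 1) + (2 ^ b - 1) < 2 ^ (b + c + 2) := by omega
  have hsm : s m = b + 1 + s X := by
    rw [hm, show X * 2 ^ (b + c + 2) + 2 ^ (b + c + 1) + (2 ^ b - 1)
        = (2 ^ (b + c + 1) + (2 ^ b - 1)) + 2 ^ (b + c + 2) * X by omega,
      s_split X hlt2,
      show (2 : ℕ) ^ (b + c + 1) + (2 ^ b - 1) = (2 ^ b - 1) + 2 ^ b * 2 ^ (c + 1) by omega,
      s_split _ (by omega : (2 : ℕ) ^ b - 1 < 2 ^ b),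
      show (2 : ℕ) ^ (c + 1) = 0 + 2 ^ (c + 1) * 1 by ring,
      s_split 1 (Nat.two_pow_pos _), s_zero, s_one, s_ones]
  refine ⟨hsm.trans hsn.symm, by omega, ?_⟩
  intro p hnp hpm hsp
  rw [hsn] at hsp
  obtain ⟨q, hq⟩ : ∃ q, p = q + 2 ^ (b + c + 2) * X := ⟨p - 2 ^ (b + c + 2) * X, by omega⟩
  have hqlb : (2 ^ (b + 1) - 1) * 2 ^ c < q := by omega
  have hqub : q < 2 ^ (b + c + 1) + (2 ^ b - 1) := by omega
  have hqlt : q < 2 ^ (b + c + 2) := by omega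
  rw [hq, s_split X hqlt] at hsp
  have hsq : s q = b + 1 := by omega
  by_cases hcase : q < 2 ^ (b + c + 1)
  · obtain ⟨f, hf⟩ : ∃ f, q = f + 2 ^ c * (2 ^ (b + 1) - 1) :=
      ⟨q - (2 ^ (b + 1) - 1) * 2 ^ c, by omega⟩
    have hf0 : 0 < f := by omega
    have hfc : f < 2 ^ c := by omega
    rw [hf, s_split _ hfc, s_ones] at hsq
    have := s_pos hf0
    omega
  · push_neg at hcase
    obtain ⟨e, he⟩ : ∃ e, q = e + 2 ^ (b + c + 1) * 1 :=
      ⟨q - 2 ^ (b + c + 1), by omega⟩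
    have he1 : e + 1 < 2 ^ b := by omega
    have helt : e < 2 ^ (b + c + 1) := by omega
    rw [he, s_split 1 helt, s_one] at hsq
    have := s_lt_of he1
    omega
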